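/- Let n be a prime number and let Ω ⊆ U_n := {0,...,n-1} be a nonempty index set that is closed under the symmetry k ∈ Ω ⟹ n−k ∈ Ω for k = 1,...,n−1. Then the set of ℓ₁-unit-norm vectors of minimal support in the real nullspace of F_Ω satisfies: MinSupp(null(F_Ω) ∩ ℝⁿ) ∩ S₁^{n-1} equals the union over all Γ ⊆ U_n with |Γ| = |Ω| + 1 of null(F_Ω) ∩ null(proj_{Γ^c}) ∩ S₁^{n-1}. -/

import Mathlib

/-- The ℓ₁ norm of a vector in ℝⁿ. -/
noncomputable def l1 {n : ℕ} (x : Fin n → ℝ) : ℝ := ∑ i, |x i|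

/-- `ξ = e^{-2πi/n}`, the primitive `n`-th root of unity used in the DFT. -/
noncomputable def dftXi (n : ℕ) : ℂ :=
  Complex.exp (-2 * (Real.pi : ℂ) * Complex.I / (n : ℂ))

/-- The `n × n` DFT matrix, `[F_n]_{k,l} = (1/√n) ξ^{kl}`. -/
noncomputable def Fdft (n : ℕ) : Matrix (Fin n) (Fin n) ℂ :=
  Matrix.of fun k l => ((Real.sqrt n : ℝ) : ℂ)⁻¹ * dftXi n ^ ((k : ℕ) * (l : ℕ))

/-- The partial DFT matrix `F_Ω`: the rows of `F_n` indexed by `Ω` (in increasing order). -/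
noncomputable def FdftRows (n : ℕ) (Ω : Finset (Fin n)) :
    Matrix (Fin Ω.card) (Fin n) ℂ :=
  Matrix.of fun a l => Fdft n (Ω.orderEmbOfFin rfl a) l

/-- `x` is a real vector in the nullspace of the partial DFT matrix `F_Ω`. -/
def InRealNull (n : ℕ) (Ω : Finset (Fin n)) (x : Fin n → ℝ) : Prop :=
  (FdftRows n Ω).mulVec (fun i => (x i : ℂ)) = 0

namespace ChebAux

open MvPolynomial

variable {k : ℕ}

/-- substitution sending `X i` to `X j`, fixing other variables -/
noncomputable def sub1 (i j : Fin k) :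
    MvPolynomial (Fin k) ℤ →ₐ[ℤ] MvPolynomial (Fin k) ℤ :=
  aeval (fun t => if t = i then X j else X t)

lemma sub1_X (i j t : Fin k) : sub1 i j (X t) = if t = i then X j else X t := by
  simp [sub1]

lemma dvd_sub_sub1 (i j : Fin k) (f : MvPolynomial (Fin k) ℤ) :
    (X i - X j) ∣ (f - sub1 i j f) := by
  induction f using MvPolynomial.induction_on with
  | C a => simp [sub1]
  | add p q hp hq =>
    have : p + q - sub1 i j (p + q) = (p - sub1 i j p) + (q - sub1 i j q) := by
      rw [map_add]; ring
    rw [this]; exact dvd_add hp hq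
  | mul_X p n hp =>
    have : p * X n - sub1 i j (p * X n)
        = (p - sub1 i j p) * sub1 i j (X n) + p * (X n - sub1 i j (X n)) := by
      rw [map_mul]; ring
    rw [this]
    refine dvd_add (Dvd.dvd.mul_right hp _) (Dvd.dvd.mul_left ?_ _)
    rw [sub1_X]
    by_cases h : n = i
    · subst h; simp
    · simp [h]

lemma X_sub_X_ne_zero {i j : Fin k} (h : i ≠ j) :
    (X i - X j : MvPolynomial (Fin k) ℤ) ≠ 0 := by
  intro h0
  have := congrArg (MvPolynomial.eval (fun t => if t = i then (1:ℤ) else 0)) h0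
  simp [h.symm] at this

lemma dvd_iff_sub1 {i j : Fin k} (h : i ≠ j) (f : MvPolynomial (Fin k) ℤ) :
    (X i - X j) ∣ f ↔ sub1 i j f = 0 := by
  constructor
  · rintro ⟨g, rfl⟩
    rw [map_mul, map_sub, sub1_X, sub1_X, if_pos rfl, if_neg (Ne.symm h)]
    simp
  · intro h0
    have := dvd_sub_sub1 i j f
    rwa [h0, sub_zero] at this

lemma prime_X_sub_X {i j : Fin k} (h : i ≠ j) :
    Prime (X i - X j : MvPolynomial (Fin k) ℤ) := by
  refine ⟨X_sub_X_ne_zero h, ?_, ?_⟩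
  · intro hu
    have h0 : sub1 i j (X i - X j) = 0 := by
      rw [map_sub, sub1_X, sub1_X, if_pos rfl, if_neg (Ne.symm h)]; simp
    have := (hu.map (sub1 i j)).ne_zero
    exact this h0
  · intro a b hab
    have hab' : sub1 i j (a*b) = 0 := (dvd_iff_sub1 h _).mp hab
    rw [map_mul] at hab'
    rcases mul_eq_zero.mp hab' with h1 | h1
    · exact Or.inl ((dvd_iff_sub1 h a).mpr h1)
    · exact Or.inr ((dvd_iff_sub1 h b).mpr h1)


lemma not_dvd_pair {p q : Fin k × Fin k} (hp : p.1 < p.2) (hq : q.1 < q.2) (hne : p ≠ q) :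
    ¬ (X p.2 - X p.1 : MvPolynomial (Fin k) ℤ) ∣ (X q.2 - X q.1) := by
  intro hdvd
  have h0 := (dvd_iff_sub1 hp.ne' _).mp hdvd
  rw [map_sub, sub1_X, sub1_X] at h0
  by_cases h22 : q.2 = p.2
  · have h11 : q.1 ≠ p.1 := by
      intro h11; exact hne (Prod.ext h11 h22).symm
    have hq1 : q.1 ≠ p.2 := (hq.trans_eq h22).ne
    rw [if_pos h22, if_neg hq1] at h0
    exact X_sub_X_ne_zero (fun hh => h11 hh.symm) h0
  · rw [if_neg h22] at h0
    by_cases h12 : q.1 = p.2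
    · have : q.2 ≠ p.1 := by
        intro hh
        have := hp.trans_eq h12.symm
        exact absurd (this.trans (hq.trans_eq hh)) (lt_irrefl _)
      rw [if_pos h12] at h0
      exact X_sub_X_ne_zero this h0
    · rw [if_neg h12] at h0
      exact X_sub_X_ne_zero hq.ne' h0

lemma prod_primes_dvd {R : Type*} [CommRing R] [IsDomain R] {ι : Type*} [DecidableEq ι]
    (s : Finset ι) (g : ι → R) :
    ∀ (f : R), (∀ i ∈ s, Prime (g i)) → (∀ i ∈ s, ∀ j ∈ s, i ≠ j → ¬ g i ∣ g j) →
      (∀ i ∈ s, g i ∣ f) → (∏ i ∈ s, g i) ∣ f := by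
  induction s using Finset.induction_on with
  | empty => intro f _ _ _; simp
  | insert _ _ ha ih =>
    rename_i a s
    intro f hp hnd hd
    obtain ⟨h, rfl⟩ := hd a (Finset.mem_insert_self a s)
    rw [Finset.prod_insert ha]
    refine mul_dvd_mul_left _ (ih h (fun i hi => hp i (Finset.mem_insert_of_mem hi)) ?_ ?_)
    · exact fun i hi j hj hij => hnd i (Finset.mem_insert_of_mem hi) j (Finset.mem_insert_of_mem hj) hij
    · intro i hi
      have hia : i ≠ a := by rintro rfl; exact ha hi
      have hpi := hp i (Finset.mem_insert_of_mem hi)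
      rcases hpi.2.2 _ _ (hd i (Finset.mem_insert_of_mem hi)) with h1 | h1
      · exact absurd h1 (hnd i (Finset.mem_insert_of_mem hi) a (Finset.mem_insert_self a s) hia)
      · exact h1

lemma prod_pairs {M : Type*} [CommMonoid M] (F : Fin k → Fin k → M) :
    ∏ p ∈ Finset.univ.filter (fun p : Fin k × Fin k => p.1 < p.2), F p.1 p.2
      = ∏ i : Fin k, ∏ j ∈ Finset.Ioi i, F i j := by
  rw [Finset.prod_filter, Fintype.prod_prod_type]
  refine Finset.prod_congr rfl fun i _ => ?_
  rw [← Finset.prod_filter]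
  refine Finset.prod_congr ?_ (fun _ _ => rfl)
  ext j; simp

/-- generalized Vandermonde factorization -/
lemma lemA (a : Fin k → ℕ) :
    ∃ S : MvPolynomial (Fin k) ℤ,
      (Matrix.of fun i j : Fin k => (X j : MvPolynomial (Fin k) ℤ) ^ (a i)).det
        = (∏ i : Fin k, ∏ j ∈ Finset.Ioi i, (X j - X i : MvPolynomial (Fin k) ℤ)) * S := by
  have hdvd : ∀ p ∈ Finset.univ.filter (fun p : Fin k × Fin k => p.1 < p.2),
      (X p.2 - X p.1 : MvPolynomial (Fin k) ℤ) ∣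
        (Matrix.of fun i j : Fin k => (X j : MvPolynomial (Fin k) ℤ) ^ (a i)).det := by
    intro p hp
    rw [Finset.mem_filter] at hp
    have hlt := hp.2
    rw [dvd_iff_sub1 hlt.ne']
    rw [AlgHom.map_det]
    refine Matrix.det_zero_of_column_eq hlt.ne' ?_
    intro i
    simp [sub1_X, hlt.ne, Matrix.map_apply]
  have := prod_primes_dvd (Finset.univ.filter (fun p : Fin k × Fin k => p.1 < p.2))
    (fun p => (X p.2 - X p.1 : MvPolynomial (Fin k) ℤ)) _
    (fun p hp => prime_X_sub_X (Finset.mem_filter.mp hp).2.ne')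
    ?_ hdvd
  · obtain ⟨S, hS⟩ := this
    exact ⟨S, by rw [← prod_pairs (fun i j => (X j - X i : MvPolynomial (Fin k) ℤ))]; exact hS⟩
  · intro p hp q hq hpq
    exact not_dvd_pair (Finset.mem_filter.mp hp).2 (Finset.mem_filter.mp hq).2 hpq


noncomputable def gpoly (m l : ℕ) : Polynomial ℤ :=
  Polynomial.X ^ l * (∑ t ∈ Finset.range (m - l), Polynomial.X ^ t)

lemma gpoly_eval_one {m l : ℕ} : (gpoly m l).eval 1 = ((m - l : ℕ) : ℤ) := by
  simp [gpoly, Polynomial.eval_finset_sum]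

lemma X_pow_sub_X_pow {m l : ℕ} (h : l ≤ m) :
    (Polynomial.X : Polynomial ℤ)^m - Polynomial.X^l = (Polynomial.X - 1) * gpoly m l := by
  have hg := geom_sum_mul (Polynomial.X : Polynomial ℤ) (m - l)
  calc (Polynomial.X : Polynomial ℤ)^m - Polynomial.X^l
      = Polynomial.X^l * (Polynomial.X^(m-l) - 1) := by
        rw [mul_sub, ← pow_add, Nat.add_sub_cancel' h, mul_one]
    _ = Polynomial.X^l * ((∑ t ∈ Finset.range (m - l), Polynomial.X ^ t) * (Polynomial.X - 1)) := by
        rw [hg]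
    _ = (Polynomial.X - 1) * gpoly m l := by rw [gpoly]; ring

lemma lemB (c : Fin k → ℕ) (hc : StrictMono c) :
    (∏ i : Fin k, ∏ j ∈ Finset.Ioi i, ((Polynomial.X : Polynomial ℤ)^(c j) - Polynomial.X^(c i)))
        = (Polynomial.X - 1)^(∑ i : Fin k, (Finset.Ioi i).card)
          * ∏ i : Fin k, ∏ j ∈ Finset.Ioi i, gpoly (c j) (c i) := by
  calc (∏ i : Fin k, ∏ j ∈ Finset.Ioi i, ((Polynomial.X : Polynomial ℤ)^(c j) - Polynomial.X^(c i)))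
      = ∏ i : Fin k, ∏ j ∈ Finset.Ioi i, ((Polynomial.X - 1) * gpoly (c j) (c i)) := by
        refine Finset.prod_congr rfl fun i _ => Finset.prod_congr rfl fun j hj => ?_
        exact X_pow_sub_X_pow (hc (Finset.mem_Ioi.mp hj)).le
    _ = ∏ i : Fin k, ((Polynomial.X - 1)^(Finset.Ioi i).card
          * ∏ j ∈ Finset.Ioi i, gpoly (c j) (c i)) := by
        refine Finset.prod_congr rfl fun i _ => ?_
        rw [Finset.prod_mul_distrib, Finset.prod_const]
    _ = _ := by rw [Finset.prod_mul_distrib, Finset.prod_pow_eq_pow_sum]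

lemma eval_one_prod_gpoly (c : Fin k → ℕ) (hc : StrictMono c) :
    (∏ i : Fin k, ∏ j ∈ Finset.Ioi i, gpoly (c j) (c i)).eval 1
      = ∏ i : Fin k, ∏ j ∈ Finset.Ioi i, ((c j : ℤ) - (c i : ℤ)) := by
  rw [Polynomial.eval_prod]
  refine Finset.prod_congr rfl fun i _ => ?_
  rw [Polynomial.eval_prod]
  refine Finset.prod_congr rfl fun j hj => ?_
  rw [gpoly_eval_one, Nat.cast_sub (hc (Finset.mem_Ioi.mp hj)).le]

lemma eval_one_aeval (c : Fin k → ℕ) (f : MvPolynomial (Fin k) ℤ) :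
    Polynomial.eval 1 (MvPolynomial.aeval (fun t => (Polynomial.X : Polynomial ℤ)^(c t)) f)
      = MvPolynomial.eval (fun _ => (1:ℤ)) f := by
  induction f using MvPolynomial.induction_on with
  | C a => simp
  | add p q hp hq => simp [hp, hq]
  | mul_X p n hp => simp [hp]


lemma aeval_vprod (c : Fin k → ℕ) :
    (MvPolynomial.aeval fun t => (Polynomial.X : Polynomial ℤ)^(c t))
      (∏ i : Fin k, ∏ j ∈ Finset.Ioi i, (X j - X i : MvPolynomial (Fin k) ℤ))
    = ∏ i : Fin k, ∏ j ∈ Finset.Ioi i,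
        ((Polynomial.X : Polynomial ℤ)^(c j) - Polynomial.X^(c i)) := by
  rw [map_prod]
  refine Finset.prod_congr rfl fun i _ => ?_
  rw [map_prod]
  refine Finset.prod_congr rfl fun j _ => ?_
  rw [map_sub, MvPolynomial.aeval_X, MvPolynomial.aeval_X]

lemma aeval_det (aexp c : Fin k → ℕ) :
    (MvPolynomial.aeval fun t => (Polynomial.X : Polynomial ℤ)^(c t))
      ((Matrix.of fun i j : Fin k => (X j : MvPolynomial (Fin k) ℤ) ^ (aexp i)).det)
    = (Matrix.of fun i j : Fin k => (Polynomial.X : Polynomial ℤ) ^ (aexp i * c j)).det := by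
  rw [AlgHom.map_det]
  congr 1
  ext i j
  simp only [AlgHom.mapMatrix_apply, Matrix.map_apply, Matrix.of_apply, map_pow,
    MvPolynomial.aeval_X, ← pow_mul, mul_comm]

lemma int_not_dvd_prod_diff {p : ℕ} (hp : p.Prime) (c : Fin k → ℕ) (hc : StrictMono c)
    (hcp : ∀ i, c i < p) :
    ¬ ((p : ℤ) ∣ ∏ i : Fin k, ∏ j ∈ Finset.Ioi i, ((c j : ℤ) - (c i : ℤ))) := by
  intro hdvd
  have hprime : Prime ((p : ℕ) : ℤ) := Nat.prime_iff_prime_int.mp hp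
  rw [Prime.dvd_finset_prod_iff hprime] at hdvd
  obtain ⟨i, _, hdvd⟩ := hdvd
  rw [Prime.dvd_finset_prod_iff hprime] at hdvd
  obtain ⟨j, hj, hdvd⟩ := hdvd
  have hij : c i < c j := hc (Finset.mem_Ioi.mp hj)
  have h1 : (0:ℤ) < (c j : ℤ) - (c i : ℤ) := by
    have := (Nat.cast_lt (α := ℤ)).mpr hij; omega
  have h2 : ((c j : ℤ) - (c i : ℤ)) < p := by
    have := (Nat.cast_lt (α := ℤ)).mpr (hcp j); omega
  have := Int.le_of_dvd h1 hdvd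
  linarith

theorem cheb {p : ℕ} (hp : p.Prime) {ζ : ℂ} (hζ : IsPrimitiveRoot ζ p) {k : ℕ}
    (a b : Fin k → ℕ) (ha : StrictMono a) (hb : StrictMono b)
    (hap : ∀ i, a i < p) (hbp : ∀ i, b i < p) :
    (Matrix.of fun i j : Fin k => ζ ^ (a i * b j)).det ≠ 0 := by
  haveI : Fact p.Prime := ⟨hp⟩
  obtain ⟨S, hS⟩ := lemA a
  have hcoe : StrictMono (fun t : Fin k => (t : ℕ)) := fun i j h => h
  have hXone : (Polynomial.X - 1 : Polynomial ℤ) ≠ 0 := by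
    have := Polynomial.X_sub_C_ne_zero (R := ℤ) 1
    simpa using this
  -- identity I1 : specializing to X^(t)
  have hI1 : (Polynomial.X - 1 : Polynomial ℤ)^(∑ i : Fin k, (Finset.Ioi i).card)
        * (∏ i : Fin k, ∏ j ∈ Finset.Ioi i, gpoly (a j) (a i))
      = (Polynomial.X - 1)^(∑ i : Fin k, (Finset.Ioi i).card)
        * ((∏ i : Fin k, ∏ j ∈ Finset.Ioi i, gpoly ((j:ℕ)) ((i:ℕ))) * (MvPolynomial.aeval
          (fun t : Fin k => (Polynomial.X : Polynomial ℤ)^(t : ℕ)) S)) := by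
    have h1 := congrArg (MvPolynomial.aeval
      (fun t : Fin k => (Polynomial.X : Polynomial ℤ)^(t : ℕ))) hS
    rw [map_mul, aeval_vprod, aeval_det] at h1
    have h2 : (Matrix.of fun i j : Fin k =>
        (Polynomial.X : Polynomial ℤ) ^ (a i * (j:ℕ))).det
        = ∏ i : Fin k, ∏ j ∈ Finset.Ioi i,
            ((Polynomial.X : Polynomial ℤ)^(a j) - Polynomial.X^(a i)) := by
      rw [show (Matrix.of fun i j : Fin k => (Polynomial.X : Polynomial ℤ) ^ (a i * (j:ℕ)))
          = Matrix.vandermonde (fun i => (Polynomial.X : Polynomial ℤ)^(a i)) from by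
        ext i j
        simp [Matrix.vandermonde, ← pow_mul]]
      exact Matrix.det_vandermonde _
    rw [h2, lemB a ha, lemB (fun t : Fin k => (t : ℕ)) hcoe] at h1
    rw [h1]
    ring
  have hI1' : (∏ i : Fin k, ∏ j ∈ Finset.Ioi i, gpoly (a j) (a i))
      = (∏ i : Fin k, ∏ j ∈ Finset.Ioi i, gpoly ((j:ℕ)) ((i:ℕ))) * (MvPolynomial.aeval
          (fun t : Fin k => (Polynomial.X : Polynomial ℤ)^(t : ℕ)) S) :=
    mul_left_cancel₀ (pow_ne_zero _ hXone) hI1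
  -- evaluate at 1
  have hEval1 : ∏ i : Fin k, ∏ j ∈ Finset.Ioi i, ((a j : ℤ) - (a i : ℤ))
      = (∏ i : Fin k, ∏ j ∈ Finset.Ioi i, (((j:ℕ) : ℤ) - ((i:ℕ) : ℤ)))
        * (MvPolynomial.eval (fun _ => (1:ℤ)) S) := by
    have := congrArg (Polynomial.eval 1) hI1'
    rwa [Polynomial.eval_mul, eval_one_prod_gpoly a ha,
      eval_one_prod_gpoly (fun t : Fin k => (t:ℕ)) hcoe,
      eval_one_aeval] at this
  have hpS1 : ¬ ((p:ℤ) ∣ MvPolynomial.eval (fun _ => (1:ℤ)) S) := by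
    intro hd
    exact int_not_dvd_prod_diff hp a ha hap (hEval1 ▸ hd.mul_left _)
  -- D-side identity
  have hI2 : (Matrix.of fun i j : Fin k => (Polynomial.X : Polynomial ℤ) ^ (a i * b j)).det
      = (Polynomial.X - 1)^(∑ i : Fin k, (Finset.Ioi i).card)
        * ((∏ i : Fin k, ∏ j ∈ Finset.Ioi i, gpoly (b j) (b i)) * (MvPolynomial.aeval
          (fun t : Fin k => (Polynomial.X : Polynomial ℤ)^(b t)) S)) := by
    have h1 := congrArg (MvPolynomial.aeval
      (fun t : Fin k => (Polynomial.X : Polynomial ℤ)^(b t))) hS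
    rw [map_mul, aeval_vprod, aeval_det] at h1
    rw [lemB b hb] at h1
    rw [h1]
    ring
  have hE1 : ((∏ i : Fin k, ∏ j ∈ Finset.Ioi i, gpoly (b j) (b i)) * (MvPolynomial.aeval
          (fun t : Fin k => (Polynomial.X : Polynomial ℤ)^(b t)) S)).eval 1
      = (∏ i : Fin k, ∏ j ∈ Finset.Ioi i, ((b j : ℤ) - (b i : ℤ)))
        * (MvPolynomial.eval (fun _ => (1:ℤ)) S) := by
    rw [Polynomial.eval_mul, eval_one_prod_gpoly b hb, eval_one_aeval]
  have hpE : ¬ ((p:ℤ) ∣ ((∏ i : Fin k, ∏ j ∈ Finset.Ioi i, gpoly (b j) (b i)) * (MvPolynomial.aeval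
          (fun t : Fin k => (Polynomial.X : Polynomial ℤ)^(b t)) S)).eval 1) := by
    rw [hE1]
    intro hd
    have hprime : Prime ((p : ℕ) : ℤ) := Nat.prime_iff_prime_int.mp hp
    rcases hprime.2.2 _ _ hd with h | h
    · exact int_not_dvd_prod_diff hp b hb hbp h
    · exact hpS1 h
  -- now suppose the complex determinant vanishes
  intro hdet0
  have haevalD : Polynomial.aeval ζ
      ((Matrix.of fun i j : Fin k => (Polynomial.X : Polynomial ℤ) ^ (a i * b j)).det) = 0 := by
    rw [AlgHom.map_det, ← hdet0]
    congr 1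
    ext i j
    simp [Matrix.map_apply]
  -- cyclotomic divides D
  have hΦmonic : (Polynomial.cyclotomic p ℤ).Monic := Polynomial.cyclotomic.monic p ℤ
  have hΦζ : Polynomial.aeval ζ (Polynomial.cyclotomic p ℤ) = 0 := by
    have h1 : Polynomial.IsRoot (Polynomial.cyclotomic p ℂ) ζ :=
      hζ.isRoot_cyclotomic hp.pos
    rw [Polynomial.aeval_def, Polynomial.eval₂_eq_eval_map]
    rw [show algebraMap ℤ ℂ = Int.castRingHom ℂ from rfl]
    rw [Polynomial.map_cyclotomic_int]
    exact h1
  have hΦdvd : (Polynomial.cyclotomic p ℤ)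
      ∣ (Matrix.of fun i j : Fin k => (Polynomial.X : Polynomial ℤ) ^ (a i * b j)).det := by
    have hmd := Polynomial.modByMonic_add_div
      ((Matrix.of fun i j : Fin k => (Polynomial.X : Polynomial ℤ) ^ (a i * b j)).det) (Polynomial.cyclotomic p ℤ)
    have haevalr : Polynomial.aeval ζ
        ((Matrix.of fun i j : Fin k => (Polynomial.X : Polynomial ℤ) ^ (a i * b j)).det
          %ₘ (Polynomial.cyclotomic p ℤ)) = 0 := by
      have := congrArg (Polynomial.aeval ζ) hmd
      rw [map_add, map_mul, hΦζ, zero_mul, add_zero, haevalD] at this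
      exact this
    set r := (Matrix.of fun i j : Fin k => (Polynomial.X : Polynomial ℤ) ^ (a i * b j)).det
      %ₘ (Polynomial.cyclotomic p ℤ) with hr
    have hr0 : r = 0 := by
      by_contra hrne
      have hrmapne : r.map (algebraMap ℤ ℚ) ≠ 0 := by
        rw [Ne, Polynomial.map_eq_zero_iff (algebraMap ℤ ℚ).injective_int]
        exact hrne
      have h4 : Polynomial.aeval ζ (r.map (algebraMap ℤ ℚ)) = 0 := by
        rw [Polynomial.aeval_map_algebraMap]
        exact haevalr
      have h5 : Polynomial.cyclotomic p ℚ ∣ r.map (algebraMap ℤ ℚ) := by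
        rw [Polynomial.cyclotomic_eq_minpoly_rat hζ hp.pos]
        exact minpoly.dvd ℚ ζ h4
      have h6 := Polynomial.degree_le_of_dvd h5 hrmapne
      have h7 : (r.map (algebraMap ℤ ℚ)).degree = r.degree :=
        Polynomial.degree_map_eq_of_injective (algebraMap ℤ ℚ).injective_int r
      have h8 : (Polynomial.cyclotomic p ℚ).degree = (Polynomial.cyclotomic p ℤ).degree := by
        rw [← Polynomial.map_cyclotomic_int p ℚ]
        exact Polynomial.degree_map_eq_of_injective (Int.castRingHom ℚ).injective_int _
      have h9 := Polynomial.degree_modByMonic_lt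
        ((Matrix.of fun i j : Fin k => (Polynomial.X : Polynomial ℤ) ^ (a i * b j)).det) hΦmonic
      rw [h7, h8] at h6
      rw [← hr] at h9
      exact absurd (lt_of_le_of_lt h6 h9) (lt_irrefl _)
    rw [hr0, zero_add] at hmd
    exact ⟨_, hmd.symm⟩
  -- prime decomposition
  have hΦprime : Prime (Polynomial.cyclotomic p ℤ) :=
    UniqueFactorizationMonoid.irreducible_iff_prime.mp (Polynomial.cyclotomic.irreducible hp.pos)
  rw [hI2] at hΦdvd
  rcases hΦprime.2.2 _ _ hΦdvd with h | h
  · have hXd : (Polynomial.cyclotomic p ℤ) ∣ (Polynomial.X - 1 : Polynomial ℤ) :=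
      hΦprime.dvd_of_dvd_pow h
    have hdeg : (Polynomial.cyclotomic p ℤ).natDegree ≤ 1 := by
      have h10 := Polynomial.natDegree_le_of_dvd hXd hXone
      have h11 : (Polynomial.X - 1 : Polynomial ℤ).natDegree = 1 := by
        simpa using Polynomial.natDegree_X_sub_C (1:ℤ)
      rwa [h11] at h10
    have hdegΦ : (Polynomial.cyclotomic p ℤ).natDegree = p - 1 := by
      rw [Polynomial.natDegree_cyclotomic, Nat.totient_prime hp]
    have hp2 : p = 2 := by
      have := hp.two_le; omega
    subst hp2
    rw [Polynomial.cyclotomic_two] at hXd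
    have := Polynomial.eval_dvd (x := (-1 : ℤ)) hXd
    simp at this
  · have := Polynomial.eval_dvd (x := (1 : ℤ)) h
    rw [show Polynomial.eval 1 (Polynomial.cyclotomic p ℤ) = (p:ℤ) from by
      exact_mod_cast Polynomial.eval_one_cyclotomic_prime] at this
    exact hpE this


section DFT

variable {n : ℕ}

lemma isPrimitiveRoot_dftXi (hn : n ≠ 0) : IsPrimitiveRoot (dftXi n) n := by
  have : dftXi n = (Complex.exp (2 * (Real.pi:ℂ) * Complex.I / n))⁻¹ := by
    rw [dftXi, ← Complex.exp_neg]
    congr 1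
    ring
  rw [this]
  exact (Complex.isPrimitiveRoot_exp n hn).inv

lemma dftXi_pow_n (hn : n ≠ 0) : dftXi n ^ n = 1 :=
  (isPrimitiveRoot_dftXi hn).pow_eq_one

lemma abs_dftXi (hn : n ≠ 0) : ‖dftXi n‖ = 1 := by
  have h1 : ‖dftXi n‖ ^ n = 1 := by
    rw [← norm_pow, dftXi_pow_n hn, norm_one]
  have h2 : (0:ℝ) ≤ ‖dftXi n‖ := norm_nonneg _
  rcases lt_trichotomy (‖dftXi n‖) 1 with h | h | h
  · have := pow_lt_one₀ h2 h hn
    rw [h1] at this; exact absurd this (lt_irrefl _)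
  · exact h
  · have := one_lt_pow₀ h hn
    rw [h1] at this; exact absurd this (lt_irrefl _)

lemma star_dftXi (hn : n ≠ 0) : starRingEnd ℂ (dftXi n) = (dftXi n)⁻¹ :=
  (Complex.inv_eq_conj (abs_dftXi hn)).symm


lemma mem_iff_emb {α : Type*} [LinearOrder α] (s : Finset α) {m : ℕ} (hm : s.card = m) (k : α) :
    k ∈ s ↔ ∃ a, s.orderEmbOfFin hm a = k := by
  have h := Finset.range_orderEmbOfFin s hm
  constructor
  · intro hk
    have : k ∈ Set.range (s.orderEmbOfFin hm) := by rw [h]; exact hk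
    exact this
  · rintro ⟨a, rfl⟩
    exact Finset.orderEmbOfFin_mem s hm a

lemma univ_map_emb {α : Type*} [LinearOrder α] (s : Finset α) {m : ℕ} (hm : s.card = m) :
    Finset.univ.map (s.orderEmbOfFin hm).toEmbedding = s := by
  ext k
  simp only [Finset.mem_map, Finset.mem_univ, true_and]
  rw [mem_iff_emb s hm k]
  rfl

lemma sum_emb {M : Type*} [AddCommMonoid M] {α : Type*} [LinearOrder α] (s : Finset α)
    {m : ℕ} (hm : s.card = m)
    (f : α → M) : ∑ c : Fin m, f (s.orderEmbOfFin hm c) = ∑ l ∈ s, f l := by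
  conv_rhs => rw [← univ_map_emb s hm]
  rw [Finset.sum_map]
  rfl

lemma mulVec_row (Ω : Finset (Fin n)) (z : Fin n → ℂ) (a : Fin Ω.card) :
    (FdftRows n Ω).mulVec z a
      = ((Real.sqrt n : ℝ) : ℂ)⁻¹
          * ∑ l : Fin n, dftXi n ^ (((Ω.orderEmbOfFin rfl a) : ℕ) * (l : ℕ)) * z l := by
  simp [FdftRows, Fdft, Matrix.mulVec, dotProduct, Finset.mul_sum, mul_assoc]

lemma sqrt_ne_zero' (hn : n ≠ 0) : ((Real.sqrt n : ℝ) : ℂ)⁻¹ ≠ 0 := by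
  have h1 : (0:ℝ) < Real.sqrt n := Real.sqrt_pos.mpr (by exact_mod_cast Nat.pos_of_ne_zero hn)
  simp [Complex.ofReal_eq_zero]
  exact hn

lemma inNull_iff (hn : n ≠ 0) (Ω : Finset (Fin n)) (z : Fin n → ℂ) :
    (FdftRows n Ω).mulVec z = 0
      ↔ ∀ k ∈ Ω, ∑ l : Fin n, dftXi n ^ ((k:ℕ) * (l : ℕ)) * z l = 0 := by
  constructor
  · intro h k hk
    obtain ⟨a, rfl⟩ := (mem_iff_emb Ω rfl k).mp hk
    have h0 := congrFun h a
    rw [mulVec_row] at h0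
    rcases mul_eq_zero.mp h0 with h1 | h1
    · exact absurd h1 (sqrt_ne_zero' hn)
    · exact h1
  · intro h
    funext a
    rw [mulVec_row, h _ (Finset.orderEmbOfFin_mem Ω rfl a), mul_zero]
    rfl

lemma star_pow_neg (hn : n ≠ 0) (k l : Fin n) :
    starRingEnd ℂ (dftXi n ^ ((((-k) : Fin n) : ℕ) * (l : ℕ)))
      = dftXi n ^ ((k:ℕ) * (l:ℕ)) := by
  have h1 : dftXi n ^ n = 1 := dftXi_pow_n hn
  have hne : dftXi n ≠ 0 := by
    intro h0
    rw [h0, zero_pow hn] at h1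
    exact zero_ne_one h1
  rw [map_pow, star_dftXi hn, inv_pow]
  have hdvd : n ∣ ((((-k) : Fin n) : ℕ) + (k:ℕ)) := by
    rw [Fin.coe_neg]
    by_cases hk : (k:ℕ) = 0
    · simp [hk]
    · have hlt : n - (k:ℕ) < n := Nat.sub_lt (Nat.pos_of_ne_zero hn) (Nat.pos_of_ne_zero hk)
      rw [Nat.mod_eq_of_lt hlt, Nat.sub_add_cancel k.isLt.le]
  obtain ⟨m, hm⟩ := hdvd
  refine inv_eq_of_mul_eq_one_right ?_
  rw [← pow_add,
    show (((-k):Fin n):ℕ) * (l:ℕ) + (k:ℕ)*(l:ℕ) = ((((-k):Fin n):ℕ) + (k:ℕ)) * l from by ring,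
    hm, show n * m * (l:ℕ) = n * (m * l) from by ring, pow_mul, h1, one_pow]


lemma null_star (hn : n ≠ 0) (Ω : Finset (Fin n)) (hsym : ∀ k ∈ Ω, -k ∈ Ω)
    (z : Fin n → ℂ) (hz : (FdftRows n Ω).mulVec z = 0) :
    (FdftRows n Ω).mulVec (fun l => starRingEnd ℂ (z l)) = 0 := by
  rw [inNull_iff hn] at hz ⊢
  intro k hk
  have h0 := hz (-k) (hsym k hk)
  have h2 := congrArg (starRingEnd ℂ) h0
  rw [map_sum, map_zero] at h2
  rw [← h2]
  refine Finset.sum_congr rfl fun l _ => ?_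
  rw [map_mul, star_pow_neg hn]

lemma small_support_zero (hp : n.Prime) (Ω : Finset (Fin n)) (T : Finset (Fin n))
    (hT : T.card ≤ Ω.card) (z : Fin n → ℂ)
    (hz : (FdftRows n Ω).mulVec z = 0) (hsupp : ∀ l ∉ T, z l = 0) : z = 0 := by
  have hn0 : n ≠ 0 := hp.pos.ne'
  obtain ⟨Ω', hΩ'sub, hΩ'card⟩ := Finset.exists_subset_card_eq hT
  set a : Fin T.card → ℕ := fun r => ((Ω'.orderEmbOfFin hΩ'card r : Fin n) : ℕ) with ha
  set b : Fin T.card → ℕ := fun c => ((T.orderEmbOfFin rfl c : Fin n) : ℕ) with hb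
  have hdet : (Matrix.of fun r c : Fin T.card => dftXi n ^ (a r * b c)).det ≠ 0 := by
    refine cheb hp (isPrimitiveRoot_dftXi hn0) a b ?_ ?_ (fun i => (Ω'.orderEmbOfFin hΩ'card i).isLt)
      (fun i => (T.orderEmbOfFin rfl i).isLt)
    · exact fun i j h => (Ω'.orderEmbOfFin hΩ'card).strictMono h
    · exact fun i j h => (T.orderEmbOfFin rfl).strictMono h
  have hrows := (inNull_iff hn0 Ω z).mp hz
  have hAv : (Matrix.of fun r c : Fin T.card => dftXi n ^ (a r * b c)).mulVec
      (fun c => z (T.orderEmbOfFin rfl c)) = 0 := by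
    funext r
    have h1 : ∑ c : Fin T.card, dftXi n ^ (a r * b c) * z (T.orderEmbOfFin rfl c)
        = ∑ l ∈ T, dftXi n ^ (a r * (l : ℕ)) * z l :=
      sum_emb T rfl (fun l => dftXi n ^ (a r * (l : ℕ)) * z l)
    have h2 : ∑ l ∈ T, dftXi n ^ (a r * (l : ℕ)) * z l
        = ∑ l : Fin n, dftXi n ^ (a r * (l : ℕ)) * z l := by
      refine Finset.sum_subset (Finset.subset_univ T) fun l _ hl => ?_
      rw [hsupp l hl, mul_zero]
    have h3 := hrows (Ω'.orderEmbOfFin hΩ'card r) (hΩ'sub (Finset.orderEmbOfFin_mem Ω' hΩ'card r))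
    simp only [Matrix.mulVec, dotProduct, Matrix.of_apply, Pi.zero_apply]
    rw [h1, h2]
    exact h3
  have hv0 := Matrix.eq_zero_of_mulVec_eq_zero hdet hAv
  funext l
  by_cases hl : l ∈ T
  · obtain ⟨c, rfl⟩ := (mem_iff_emb T rfl l).mp hl
    exact congrFun hv0 c
  · exact hsupp l hl

lemma exists_null_supported (hn0 : n ≠ 0) (Ω : Finset (Fin n)) (hsym : ∀ k ∈ Ω, -k ∈ Ω)
    (Γ : Finset (Fin n)) (hΓ : Γ.card = Ω.card + 1) :
    ∃ y : Fin n → ℝ, (FdftRows n Ω).mulVec (fun i => ((y i : ℂ))) = 0 ∧ y ≠ 0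
      ∧ ∀ i ∉ Γ, y i = 0 := by
  classical
  set B : Matrix (Fin Ω.card) (Fin (Ω.card+1)) ℂ := Matrix.of fun a c =>
    dftXi n ^ (((Ω.orderEmbOfFin rfl a : Fin n) : ℕ) * ((Γ.orderEmbOfFin hΓ c : Fin n) : ℕ))
    with hB
  have hnotinj : ¬ Function.Injective B.mulVecLin := by
    intro hinj
    have h1 := LinearMap.finrank_le_finrank_of_injective hinj
    rw [Module.finrank_pi, Module.finrank_pi] at h1
    simp at h1
  obtain ⟨u, v, huv, hne⟩ := Function.not_injective_iff.mp hnotinj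
  set w := u - v with hw
  have hwne : w ≠ 0 := sub_ne_zero.mpr hne
  have hBw : B.mulVec w = 0 := by
    have : B.mulVecLin w = 0 := by
      rw [hw, map_sub, huv, sub_self]
    simpa [Matrix.mulVecLin] using this
  set e := Γ.orderIsoOfFin hΓ with he
  set z : Fin n → ℂ := fun l => if h : l ∈ Γ then w (e.symm ⟨l, h⟩) else 0 with hzdef
  have hzΓ : ∀ l ∉ Γ, z l = 0 := fun l hl => by simp [hzdef, hl]
  have hzemb : ∀ c : Fin (Ω.card+1), z (Γ.orderEmbOfFin hΓ c) = w c := by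
    intro c
    have hmem : (Γ.orderEmbOfFin hΓ c : Fin n) ∈ Γ := Finset.orderEmbOfFin_mem Γ hΓ c
    have hiso : e c = ⟨Γ.orderEmbOfFin hΓ c, hmem⟩ :=
      Subtype.ext (Finset.coe_orderIsoOfFin_apply Γ hΓ c)
    rw [hzdef]
    simp only [hmem, dif_pos]
    rw [show (⟨(Γ.orderEmbOfFin hΓ c : Fin n), hmem⟩ : {x // x ∈ Γ}) = e c from hiso.symm,
      OrderIso.symm_apply_apply]
  have hznull : (FdftRows n Ω).mulVec z = 0 := by
    rw [inNull_iff hn0]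
    intro k hk
    obtain ⟨a, rfl⟩ := (mem_iff_emb Ω rfl k).mp hk
    have h2 : ∑ l : Fin n, dftXi n ^ (((Ω.orderEmbOfFin rfl a : Fin n):ℕ) * (l : ℕ)) * z l
        = ∑ l ∈ Γ, dftXi n ^ (((Ω.orderEmbOfFin rfl a : Fin n):ℕ) * (l : ℕ)) * z l := by
      refine (Finset.sum_subset (Finset.subset_univ Γ) fun l _ hl => ?_).symm
      rw [hzΓ l hl, mul_zero]
    have h1 : ∑ l ∈ Γ, dftXi n ^ (((Ω.orderEmbOfFin rfl a : Fin n):ℕ) * (l : ℕ)) * z l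
        = ∑ c : Fin (Ω.card+1),
            dftXi n ^ (((Ω.orderEmbOfFin rfl a : Fin n):ℕ)
              * ((Γ.orderEmbOfFin hΓ c : Fin n) : ℕ)) * z (Γ.orderEmbOfFin hΓ c) :=
      (sum_emb Γ hΓ _).symm
    rw [h2, h1]
    have h3 := congrFun hBw a
    simp only [Matrix.mulVec, dotProduct, hB, Matrix.of_apply, Pi.zero_apply] at h3
    rw [← h3]
    exact Finset.sum_congr rfl fun c _ => by rw [hzemb c]
  have hzstar : (FdftRows n Ω).mulVec (fun l => starRingEnd ℂ (z l)) = 0 :=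
    null_star hn0 Ω hsym z hznull
  -- real and imaginary parts are null
  have hre : (FdftRows n Ω).mulVec (fun l => (((z l).re : ℝ) : ℂ)) = 0 := by
    have hvec : (fun l => (((z l).re : ℝ) : ℂ))
        = (2⁻¹ : ℂ) • (z + fun l => starRingEnd ℂ (z l)) := by
      funext l
      simp only [Pi.smul_apply, Pi.add_apply, smul_eq_mul]
      rw [Complex.add_conj]
      push_cast
      ring
    rw [hvec, Matrix.mulVec_smul, Matrix.mulVec_add, hznull, hzstar, add_zero, smul_zero]
  have him : (FdftRows n Ω).mulVec (fun l => (((z l).im : ℝ) : ℂ)) = 0 := by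
    have hvec : (fun l => (((z l).im : ℝ) : ℂ))
        = ((2 * Complex.I)⁻¹ : ℂ) • (z - fun l => starRingEnd ℂ (z l)) := by
      funext l
      simp only [Pi.smul_apply, Pi.sub_apply, smul_eq_mul]
      rw [Complex.sub_conj]
      have hI : (Complex.I : ℂ) ≠ 0 := Complex.I_ne_zero
      field_simp
      norm_cast
      ring
    rw [hvec, Matrix.mulVec_smul, Matrix.mulVec_sub, hznull, hzstar, sub_zero, smul_zero]
  -- z is nonzero somewhere
  have : ∃ l, z l ≠ 0 := by
    by_contra h
    push_neg at h
    apply hwne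
    funext c
    rw [← hzemb c, h]
    rfl
  obtain ⟨l₀, hl₀⟩ := this
  by_cases hre0 : (fun l => (z l).re) = (0 : Fin n → ℝ)
  · -- use imaginary part
    refine ⟨fun l => (z l).im, him, ?_, fun i hi => by show (z i).im = 0; rw [hzΓ i hi]; simp⟩
    intro h0
    apply hl₀
    have h1 := congrFun hre0 l₀
    have h2 := congrFun h0 l₀
    exact Complex.ext h1 h2
  · refine ⟨fun l => (z l).re, hre, ?_, fun i hi => by show (z i).re = 0; rw [hzΓ i hi]; simp⟩
    intro h0
    exact hre0 h0

end DFT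

end ChebAux

/-- Let `n` be prime and `Ω ⊆ U_n` a nonempty index set closed under `k ↦ n - k`.  Then
the unit-ℓ₁-norm vectors of minimal support in the real nullspace of `F_Ω` are exactly the
unit-ℓ₁-norm real nullspace vectors supported on some `Γ ⊆ U_n` with `|Γ| = |Ω| + 1`. -/
theorem stmt15 (n : ℕ) (hn : n.Prime) (Ω : Finset (Fin n)) (hΩ : Ω.Nonempty)
    (hsym : ∀ k ∈ Ω, -k ∈ Ω) :
    {x : Fin n → ℝ | (InRealNull n Ω x ∧ x ≠ 0 ∧
        ¬∃ y : Fin n → ℝ, InRealNull n Ω y ∧ y ≠ 0 ∧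
          Function.support y ⊂ Function.support x) ∧ l1 x = 1}
    = {x : Fin n → ℝ | ∃ Γ : Finset (Fin n), Γ.card = Ω.card + 1 ∧
        InRealNull n Ω x ∧ (∀ i ∉ Γ, x i = 0) ∧ l1 x = 1} := by
  open ChebAux in
  classical
  have hn0 : n ≠ 0 := hn.pos.ne'
  ext x
  simp only [Set.mem_setOf_eq]
  constructor
  · rintro ⟨⟨hnull, hne, hmin⟩, hl1⟩
    set T : Finset (Fin n) := Finset.univ.filter (fun i => x i ≠ 0) with hT
    have hTsupp : (↑T : Set (Fin n)) = Function.support x := by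
      ext i; simp [hT, Function.mem_support]
    have hge : Ω.card + 1 ≤ T.card := by
      by_contra h
      push_neg at h
      have hle : T.card ≤ Ω.card := by omega
      have h0 := small_support_zero hn Ω T hle (fun i => (x i : ℂ)) hnull ?_
      · apply hne
        funext i
        have h2 := congrFun h0 i
        simp only [Pi.zero_apply] at h2
        exact_mod_cast h2
      · intro l hl
        have h1 : ¬ x l ≠ 0 := by simpa [hT] using hl
        simp [not_not.mp h1]
    have hle : T.card ≤ Ω.card + 1 := by
      by_contra h
      push_neg at h
      obtain ⟨Γ', hΓ'sub, hΓ'card⟩ := Finset.exists_subset_card_eq (le_of_lt h)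
      obtain ⟨y, hynull, hyne, hysupp⟩ := exists_null_supported hn0 Ω hsym Γ' hΓ'card
      have hΓ'T : ∃ t ∈ T, t ∉ Γ' := by
        by_contra hcon
        push_neg at hcon
        have : T ⊆ Γ' := hcon
        have := Finset.card_le_card this
        omega
      obtain ⟨t, htT, htΓ'⟩ := hΓ'T
      apply hmin
      refine ⟨y, hynull, hyne, ?_⟩
      have hsub1 : Function.support y ⊆ ↑Γ' := by
        intro l hl
        by_contra hlΓ
        exact Function.mem_support.mp hl (hysupp l (fun hmem => hlΓ (Finset.mem_coe.mpr hmem)))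
      have hsub2 : (↑Γ' : Set (Fin n)) ⊆ Function.support x := by
        rw [← hTsupp]
        exact Finset.coe_subset.mpr hΓ'sub
      refine (Set.ssubset_iff_of_subset (hsub1.trans hsub2)).mpr ?_
      refine ⟨t, ?_, fun hy => htΓ' (Finset.mem_coe.mp (hsub1 hy))⟩
      rw [← hTsupp]
      exact Finset.mem_coe.mpr htT
    refine ⟨T, le_antisymm hle hge, hnull, ?_, hl1⟩
    intro i hi
    have h1 : ¬ x i ≠ 0 := by simpa [hT] using hi
    exact not_not.mp h1
  · rintro ⟨Γ, hΓcard, hnull, hsupp, hl1⟩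
    refine ⟨⟨hnull, ?_, ?_⟩, hl1⟩
    · intro h0
      rw [h0] at hl1
      simp [l1] at hl1
    · rintro ⟨y, hynull, hyne, hysub⟩
      set Ty : Finset (Fin n) := Finset.univ.filter (fun i => y i ≠ 0) with hTy
      obtain ⟨t, htx, hty⟩ := Set.exists_of_ssubset hysub
      have htΓ : t ∈ Γ := by
        by_contra h
        exact Function.mem_support.mp htx (hsupp t h)
      have hTysub : Ty ⊆ Γ.erase t := by
        intro i hi
        have hyi : y i ≠ 0 := by simpa [hTy] using hi
        have hix : i ∈ Function.support x := hysub.subset (Function.mem_support.mpr hyi)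
        have hiΓ : i ∈ Γ := by
          by_contra h
          exact Function.mem_support.mp hix (hsupp i h)
        refine Finset.mem_erase.mpr ⟨?_, hiΓ⟩
        rintro rfl
        exact hty (Function.mem_support.mpr hyi)
      have hcard : Ty.card ≤ Ω.card := by
        have h1 := Finset.card_le_card hTysub
        rw [Finset.card_erase_of_mem htΓ, hΓcard] at h1
        omega
      have h0 := small_support_zero hn Ω Ty hcard (fun i => (y i : ℂ)) hynull ?_
      · apply hyne
        funext i
        have h2 := congrFun h0 i
        simp only [Pi.zero_apply] at h2
        exact_mod_cast h2
      · intro l hl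
        have h1 : ¬ y l ≠ 0 := by simpa [hTy] using hl
        simp [not_not.mp h1]
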